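/- arXiv:2111.05239 — 2 statements merged into one kernel-verified Lean document; each statement's English description precedes it below -/
import Mathlib

section
/- Every connected regular bipartite graph of diameter 3 and girth 6 is a design graph with parameter c = 1, i.e., any two distinct vertices in the same part have exactly one common neighbor. -/
open scoped Classical

/-- `G` is a design graph with parameters `(m, d, c)`: a `d`-regular bipartite graph with
parts `V₁`, `V₂` each of size `m`, in which any two distinct vertices of the same part have
exactly `c ≠ 0` common neighbors, and which is not complete bipartite. -/
def SimpleGraph.IsDesignGraph {V : Type*} (G : SimpleGraph V) (V₁ V₂ : Set V)
    (m d c : ℕ) : Prop :=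
  c ≠ 0 ∧ Disjoint V₁ V₂ ∧ V₁ ∪ V₂ = Set.univ ∧ V₁.ncard = m ∧ V₂.ncard = m ∧
  (∀ v w, G.Adj v w → (v ∈ V₁ ∧ w ∈ V₂) ∨ (v ∈ V₂ ∧ w ∈ V₁)) ∧
  (∀ v, (G.neighborSet v).ncard = d) ∧
  (∀ v w, v ≠ w → (v ∈ V₁ ∧ w ∈ V₁) ∨ (v ∈ V₂ ∧ w ∈ V₂) →
    (G.neighborSet v ∩ G.neighborSet w).ncard = c) ∧
  ¬ (∀ v ∈ V₁, ∀ w ∈ V₂, G.Adj v w)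


section aux
variable {V : Type*} {G : SimpleGraph V} {V₁ V₂ : Set V}

lemma parity_lemma (hdisj : Disjoint V₁ V₂) (hcover : V₁ ∪ V₂ = Set.univ)
    (hbip : ∀ v w, G.Adj v w → (v ∈ V₁ ∧ w ∈ V₂) ∨ (v ∈ V₂ ∧ w ∈ V₁)) :
    ∀ {a b : V} (p : G.Walk a b), (Even p.length ↔ (a ∈ V₁ ↔ b ∈ V₁)) := by
  intro a b p
  induction p with
  | nil => simp
  | @cons a c b h p ih =>
    have hmem : ∀ x : V, x ∈ V₁ ∨ x ∈ V₂ := fun x => by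
      have := hcover.ge (Set.mem_univ x); simpa using this
    have hnot : ∀ x : V, x ∈ V₂ → x ∉ V₁ := fun x hx hx' => hdisj.ne_of_mem hx' hx rfl
    have huc : a ∈ V₁ ↔ c ∉ V₁ := by
      rcases hbip _ _ h with ⟨h1, h2⟩ | ⟨h1, h2⟩
      · exact ⟨fun _ => hnot _ h2, fun _ => h1⟩
      · exact ⟨fun ha => absurd ha (hnot _ h1), fun hc => (hc h2).elim⟩
    simp only [SimpleGraph.Walk.length_cons, Nat.even_add_one, ih, huc]
    tauto

lemma no_four_cycle (hgirth : G.egirth = 6) {v w x y : V} (hvw : v ≠ w)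
    (hx : x ∈ G.neighborSet v ∩ G.neighborSet w)
    (hy : y ∈ G.neighborSet v ∩ G.neighborSet w) : x = y := by
  by_contra hxy
  obtain ⟨hvx, hwx⟩ := hx
  obtain ⟨hvy, hwy⟩ := hy
  rw [SimpleGraph.mem_neighborSet] at hvx hwx hvy hwy
  let c : G.Walk v v :=
    .cons hvx (.cons hwx.symm (.cons hwy (.cons hvy.symm .nil)))
  have hc : c.IsCycle := by
    have h1 := hvx.ne; have h2 := hvy.ne; have h3 := hwx.ne; have h4 := hwy.ne
    rw [SimpleGraph.Walk.isCycle_def]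
    refine ⟨?_, by simp [c], ?_⟩
    · rw [SimpleGraph.Walk.isTrail_def]
      simp only [c, SimpleGraph.Walk.edges_cons, SimpleGraph.Walk.edges_nil,
        List.nodup_cons, List.mem_cons, List.not_mem_nil, or_false, List.nodup_nil, and_true,
        List.mem_singleton, Sym2.eq_iff]
      refine ⟨?_, ?_, ?_⟩ <;> push_neg <;> aesop
    · show (c.support.tail).Nodup
      simp only [c, SimpleGraph.Walk.support_cons, SimpleGraph.Walk.support_nil, List.tail_cons]
      simp only [List.nodup_cons, List.mem_cons, List.not_mem_nil, or_false, List.nodup_nil,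
        and_true, List.mem_singleton]
      push_neg
      exact ⟨⟨fun h => h3 h.symm, hxy, fun h => h1 h.symm⟩, ⟨h4, fun h => hvw h.symm⟩, ⟨fun h => h2 h.symm, trivial⟩⟩
  have h6 : (6 : ℕ∞) ≤ c.length := by
    have := SimpleGraph.le_egirth (G := G) (n := G.egirth).mp le_rfl v c hc
    rwa [hgirth] at this
  simp only [c, SimpleGraph.Walk.length_cons, SimpleGraph.Walk.length_nil] at h6
  norm_num at h6
end aux


theorem stmt_3 {V : Type*} (G : SimpleGraph V) (V₁ V₂ : Set V) (d : ℕ)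
    (hconn : G.Connected)
    (hdisj : Disjoint V₁ V₂) (hcover : V₁ ∪ V₂ = Set.univ)
    (hbip : ∀ v w, G.Adj v w → (v ∈ V₁ ∧ w ∈ V₂) ∨ (v ∈ V₂ ∧ w ∈ V₁))
    (hreg : ∀ v, (G.neighborSet v).ncard = d)
    (hdiam : G.ediam = 3) (hgirth : G.egirth = 6) :
    ∀ v w, v ≠ w → (v ∈ V₁ ∧ w ∈ V₁) ∨ (v ∈ V₂ ∧ w ∈ V₂) →
      (G.neighborSet v ∩ G.neighborSet w).ncard = 1 := by
  intro v w hvw hsame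
  -- existence of a common neighbor
  obtain ⟨p, hp⟩ := (hconn v w).exists_walk_length_eq_edist
  have hle : (p.length : ℕ∞) ≤ 3 := by
    rw [hp, ← hdiam]; exact SimpleGraph.edist_le_ediam
  have hle3 : p.length ≤ 3 := by exact_mod_cast hle
  have heven : Even p.length := by
    rw [parity_lemma hdisj hcover hbip p]
    rcases hsame with ⟨h1, h2⟩ | ⟨h1, h2⟩
    · exact iff_of_true h1 h2
    · exact iff_of_false (fun h => hdisj.ne_of_mem h h1 rfl)
        (fun h => hdisj.ne_of_mem h h2 rfl)
  have hne0 : p.length ≠ 0 := fun h => hvw (SimpleGraph.Walk.eq_of_length_eq_zero h)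
  have hlen2 : p.length = 2 := by
    rcases heven with ⟨k, hk⟩; omega
  cases p with
  | nil => simp at hlen2
  | @cons _ u _ h q =>
    cases q with
    | nil => simp at hlen2
    | @cons _ x _ h' r =>
      simp only [SimpleGraph.Walk.length_cons] at hlen2
      have hr0 : r.length = 0 := by omega
      have hxw := SimpleGraph.Walk.eq_of_length_eq_zero hr0
      subst hxw
      rw [Set.ncard_eq_one]
      refine ⟨u, Set.eq_singleton_iff_unique_mem.mpr ⟨⟨h, h'.symm⟩, fun z hz => ?_⟩⟩
      exact no_four_cycle hgirth hvw hz ⟨h, h'.symm⟩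
end

section
/- Let G be a vertex-transitive graph with distance matrix D, and let H ≤ Aut(G) have an orbit partition π containing a singleton cell {x}. Then the set of distinct eigenvalues of the quotient matrix Q of D over π equals the set of distinct eigenvalues of D. -/
open scoped Classical

/-- The distance matrix of a graph `G`, with real entries. -/
noncomputable def SimpleGraph.distMatrix {V : Type*} [Fintype V] (G : SimpleGraph V) :
    Matrix V V ℝ :=
  Matrix.of fun u v => (G.dist u v : ℝ)

/-- `θ` is an eigenvalue of the square real matrix `M`. -/
def Matrix.HasEigenval {ι : Type*} [Fintype ι] (M : Matrix ι ι ℝ) (θ : ℝ) : Prop :=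
  ∃ f : ι → ℝ, f ≠ 0 ∧ M.mulVec f = θ • f

section Aux

variable {V ι : Type*} [Fintype V] [Fintype ι]

lemma aux_dist_iso (G : SimpleGraph V) (hconn : G.Connected) (a : G ≃g G) (u v : V) :
    G.dist (a u) (a v) = G.dist u v := by
  have key : ∀ (b : G ≃g G) (u v : V), G.dist (b u) (b v) ≤ G.dist u v := by
    intro b u v
    obtain ⟨p, hp⟩ := (hconn u v).exists_walk_length_eq_dist
    calc G.dist (b u) (b v) ≤ (p.map b.toHom).length := SimpleGraph.dist_le _
      _ = p.length := p.length_map _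
      _ = _ := hp
  refine le_antisymm (key a u v) ?_
  have := key a.symm (a u) (a v)
  simpa using this

lemma aux_sum_cells (cells : ι → Finset V) (hpart : ∀ v : V, ∃! i, v ∈ cells i)
    (F : V → ℝ) : ∑ j, ∑ w ∈ cells j, F w = ∑ w, F w := by
  have hdisj : ((Finset.univ : Finset ι) : Set ι).PairwiseDisjoint cells := by
    intro i _ j _ hij
    exact Finset.disjoint_left.mpr fun v hvi hvj => hij ((hpart v).unique hvi hvj)
  have hcover : Finset.univ.biUnion cells = (Finset.univ : Finset V) := by
    ext v
    simp only [Finset.mem_biUnion, Finset.mem_univ, true_and, iff_true]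
    exact (hpart v).exists
  rw [← Finset.sum_biUnion hdisj, hcover]

lemma aux_eigen_comp (G : SimpleGraph V) (hconn : G.Connected) (f : V → ℝ) (θ : ℝ)
    (hf : G.distMatrix.mulVec f = θ • f) (a : G ≃g G) (v : V) :
    ∑ w, G.distMatrix v w * f (a w) = θ * f (a v) := by
  calc ∑ w, G.distMatrix v w * f (a w)
      = ∑ w, G.distMatrix (a v) (a w) * f (a w) := by
        refine Finset.sum_congr rfl fun w _ => ?_
        simp [SimpleGraph.distMatrix, aux_dist_iso G hconn a]
    _ = ∑ w, G.distMatrix (a v) w * f w :=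
        Fintype.sum_equiv a.toEquiv _ _ (fun w => rfl)
    _ = (G.distMatrix.mulVec f) (a v) := rfl
    _ = θ * f (a v) := by rw [hf]; rfl

end Aux

theorem stmt_9 {V ι : Type*} [Fintype V] [Fintype ι] (G : SimpleGraph V)
    (hconn : G.Connected)
    (htrans : ∀ u v : V, ∃ g : G ≃g G, g u = v)
    (H : Subgroup (G ≃g G)) (cells : ι → Finset V)
    (hpart : ∀ v : V, ∃! i, v ∈ cells i)
    (horbit : ∀ i : ι, ∃ x ∈ cells i, ∀ y : V, y ∈ cells i ↔ ∃ g ∈ H, g x = y)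
    (hsingleton : ∃ i : ι, ∃ x : V, cells i = {x})
    (Q : Matrix ι ι ℝ)
    (hQ : ∀ i j : ι, ∀ v ∈ cells i, ∑ w ∈ cells j, (G.dist v w : ℝ) = Q i j) :
    {θ : ℝ | Q.HasEigenval θ} = {θ : ℝ | G.distMatrix.HasEigenval θ} := by
  haveI : Finite (G ≃g G) :=
    Finite.of_injective (fun a => (a : V → V)) DFunLike.coe_injective
  haveI : Fintype (G ≃g G) := Fintype.ofFinite _
  -- representatives of cells
  choose rep hrep hrep2 using horbit
  ext θ
  simp only [Set.mem_setOf_eq, Matrix.HasEigenval]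
  constructor
  · -- quotient eigenvalue lifts to eigenvalue of D
    rintro ⟨f, hf0, hf⟩
    choose idx hidx using fun v => (hpart v).exists
    refine ⟨fun v => f (idx v), ?_, ?_⟩
    · obtain ⟨i, hi⟩ := Function.ne_iff.mp hf0
      intro hF
      apply hi
      have hxi : idx (rep i) = i := (hpart (rep i)).unique (hidx (rep i)) (hrep i)
      have := congrFun hF (rep i)
      rwa [hxi] at this
    · funext v
      show ∑ w, G.distMatrix v w * f (idx w) = θ * f (idx v)
      calc ∑ w, G.distMatrix v w * f (idx w)
          = ∑ j, ∑ w ∈ cells j, G.distMatrix v w * f (idx w) :=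
            (aux_sum_cells cells hpart _).symm
        _ = ∑ j, Q (idx v) j * f j := by
            refine Finset.sum_congr rfl fun j _ => ?_
            have h1 : ∀ w ∈ cells j, G.distMatrix v w * f (idx w)
                = G.distMatrix v w * f j := fun w hw => by
              rw [(hpart w).unique (hidx w) hw]
            rw [Finset.sum_congr rfl h1, ← Finset.sum_mul, ← hQ (idx v) j v (hidx v)]
            rfl
        _ = θ * f (idx v) := by
            have := congrFun hf (idx v)
            simpa [Matrix.mulVec, dotProduct] using this
  · -- eigenvalue of D descends to the quotient
    rintro ⟨f, hf0, hf⟩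
    obtain ⟨i₀, x, hx⟩ := hsingleton
    have hx0 : x ∈ cells i₀ := by rw [hx]; exact Finset.mem_singleton_self x
    have hrx : rep i₀ = x := by
      have := hrep i₀; rwa [hx, Finset.mem_singleton] at this
    -- every element of H fixes x
    have hfix : ∀ h : ↥H, (h : G ≃g G) x = x := by
      intro h
      have : (h : G ≃g G) x ∈ cells i₀ :=
        (hrep2 i₀ _).mpr ⟨(h : G ≃g G), h.2, by rw [hrx]⟩
      rwa [hx, Finset.mem_singleton] at this
    obtain ⟨v, hv⟩ := Function.ne_iff.mp hf0
    obtain ⟨g, hg⟩ := htrans x v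
    -- average of f over the coset g • H
    set F : V → ℝ := fun w => ∑ h : ↥H, f (g ((h : G ≃g G) w)) with hFdef
    have hFeig : ∀ w, ∑ u, G.distMatrix w u * F u = θ * F w := by
      intro w
      calc ∑ u, G.distMatrix w u * F u
          = ∑ h : ↥H, ∑ u, G.distMatrix w u * f (g ((h : G ≃g G) u)) := by
            simp_rw [hFdef, Finset.mul_sum]
            exact Finset.sum_comm
        _ = ∑ h : ↥H, θ * f (g ((h : G ≃g G) w)) := by
            refine Finset.sum_congr rfl fun h _ => ?_
            have := aux_eigen_comp G hconn f θ hf (g * (h : G ≃g G)) w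
            simpa [RelIso.mul_apply] using this
        _ = θ * F w := by rw [hFdef, Finset.mul_sum]
    -- F is H-invariant
    have hinv : ∀ (h₀ : ↥H) (w : V), F ((h₀ : G ≃g G) w) = F w := by
      intro h₀ w
      simp only [hFdef]
      refine Fintype.sum_equiv (Equiv.mulRight h₀) _ _ fun h => ?_
      simp [RelIso.mul_apply]
    -- F is constant on cells
    have hconst : ∀ (j : ι), ∀ w ∈ cells j, F w = F (rep j) := by
      intro j w hw
      obtain ⟨h, hh, hhw⟩ := (hrep2 j w).mp hw
      rw [← hhw]
      exact hinv ⟨h, hh⟩ (rep j)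
    -- F is nonzero at x
    have hFx : F x ≠ 0 := by
      have hcalc : F x = (Fintype.card ↥H : ℝ) * f v := by
        have h1 : F x = ∑ _h : ↥H, f v :=
          Finset.sum_congr rfl fun h _ => by rw [hfix h, hg]
        rw [h1, Finset.sum_const, Finset.card_univ, nsmul_eq_mul]
      rw [hcalc]
      exact mul_ne_zero (Nat.cast_ne_zero.mpr Fintype.card_ne_zero) hv
    refine ⟨fun j => F (rep j), ?_, ?_⟩
    · intro h0
      apply hFx
      have := congrFun h0 i₀
      rwa [hrx] at this
    · funext i
      show ∑ j, Q i j * F (rep j) = θ * F (rep i)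
      calc ∑ j, Q i j * F (rep j)
          = ∑ j, ∑ w ∈ cells j, G.distMatrix (rep i) w * F w := by
            refine Finset.sum_congr rfl fun j _ => ?_
            rw [← hQ i j (rep i) (hrep i), Finset.sum_mul]
            exact Finset.sum_congr rfl fun w hw => by
              rw [hconst j w hw]; rfl
        _ = ∑ w, G.distMatrix (rep i) w * F w := aux_sum_cells cells hpart _
        _ = θ * F (rep i) := hFeig (rep i)
end
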